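/- For every ξ ∈ s with ‖ξ‖_{ℓ₂} ≠ 0, the rank-one operator x_ξ := ‖ξ‖_{ℓ₂}^{-1} ⟨·, ξ⟩ξ satisfies ‖x_ξ‖_m := sup{|x_ξ ζ|_m : |ζ|_{-m} ≤ 1} = ‖ξ‖_{ℓ₂}^{-1}|ξ|_m² ≤ |ξ|_{2m} for every m ∈ ℕ. Consequently, if B is a bounded subset of s then {x_ξ : ξ ∈ B, ξ ≠ 0} is a bounded subset of L(s', s). -/

import Mathlib

/-- The `n`-th norm `|ξ|_n = (Σ_j |ξ_j|² j^{2n})^{1/2}` of the space `s` of rapidly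
decreasing sequences (indices shifted: `j : ℕ` stands for the positive integer `j+1`). -/
noncomputable def pnorm (n : ℕ) (ξ : ℕ → ℂ) : ℝ :=
  Real.sqrt (∑' j : ℕ, ‖ξ j‖ ^ 2 * ((j : ℝ) + 1) ^ (2 * n))

/-- The dual norm `|ξ|_{-n} = (Σ_j |ξ_j|² j^{-2n})^{1/2}`. -/
noncomputable def mnorm (n : ℕ) (ξ : ℕ → ℂ) : ℝ :=
  Real.sqrt (∑' j : ℕ, ‖ξ j‖ ^ 2 / ((j : ℝ) + 1) ^ (2 * n))

/-- Membership in the space `s` of rapidly decreasing sequences. -/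
def InS (ξ : ℕ → ℂ) : Prop :=
  ∀ n : ℕ, Summable fun j : ℕ => ‖ξ j‖ ^ 2 * ((j : ℝ) + 1) ^ (2 * n)

/-- Membership in the space `s'` of slowly increasing sequences. -/
def InS' (ξ : ℕ → ℂ) : Prop :=
  ∃ n : ℕ, Summable fun j : ℕ => ‖ξ j‖ ^ 2 / ((j : ℝ) + 1) ^ (2 * n)

/-- The pairing `⟨ξ, η⟩ = Σ_j ξ_j conj(η_j)` extending the `ℓ₂` inner product. -/
noncomputable def pairing (ξ η : ℕ → ℂ) : ℂ := ∑' j : ℕ, ξ j * (starRingEnd ℂ) (η j)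

/-- The normalized rank-one operator `x_ξ = ‖ξ‖₂⁻¹ ⟨·,ξ⟩ξ : s' → s`. -/
noncomputable def rankOne (ξ : ℕ → ℂ) : (ℕ → ℂ) → (ℕ → ℂ) :=
  fun ζ j => ((pnorm 0 ξ : ℝ)⁻¹ : ℂ) * pairing ζ ξ * ξ j

/- ---------------- auxiliary lemmas ---------------- -/

lemma summable_mul_of_sq (f g : ℕ → ℝ) (hf0 : ∀ j, 0 ≤ f j) (hg0 : ∀ j, 0 ≤ g j)
    (hf : Summable fun j => f j ^ 2) (hg : Summable fun j => g j ^ 2) :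
    Summable fun j => f j * g j := by
  refine Summable.of_nonneg_of_le (fun j => mul_nonneg (hf0 j) (hg0 j)) (fun j => ?_)
    ((hf.add hg).div_const 2)
  nlinarith [sq_nonneg (f j - g j)]

lemma tsum_cs (f g : ℕ → ℝ) (hf0 : ∀ j, 0 ≤ f j) (hg0 : ∀ j, 0 ≤ g j)
    (hf : Summable fun j => f j ^ 2) (hg : Summable fun j => g j ^ 2) :
    ∑' j, f j * g j ≤ Real.sqrt (∑' j, f j ^ 2) * Real.sqrt (∑' j, g j ^ 2) := by
  refine Summable.tsum_le_of_sum_le (summable_mul_of_sq f g hf0 hg0 hf hg) fun s => ?_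
  calc ∑ i ∈ s, f i * g i
      ≤ Real.sqrt (∑ i ∈ s, f i ^ 2) * Real.sqrt (∑ i ∈ s, g i ^ 2) :=
        Real.sum_mul_le_sqrt_mul_sqrt s f g
    _ ≤ _ := by
        gcongr
        · exact Summable.sum_le_tsum s (fun i _ => sq_nonneg _) hf
        · exact Summable.sum_le_tsum s (fun i _ => sq_nonneg _) hg

lemma pnorm_nonneg (m : ℕ) (ξ : ℕ → ℂ) : 0 ≤ pnorm m ξ := Real.sqrt_nonneg _

lemma pnorm_const_mul (c : ℂ) (ξ : ℕ → ℂ) (m : ℕ) :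
    pnorm m (fun j => c * ξ j) = ‖c‖ * pnorm m ξ := by
  unfold pnorm
  have h : ∀ j : ℕ, ‖c * ξ j‖ ^ 2 * ((j : ℝ) + 1) ^ (2 * m)
      = ‖c‖ ^ 2 * (‖ξ j‖ ^ 2 * ((j : ℝ) + 1) ^ (2 * m)) := by
    intro j; rw [norm_mul]; ring
  rw [tsum_congr h, tsum_mul_left, Real.sqrt_mul (sq_nonneg _), Real.sqrt_sq (norm_nonneg c)]

lemma pairing_bound (ξ ζ : ℕ → ℂ) (m : ℕ)
    (hξ : Summable fun j : ℕ => ‖ξ j‖ ^ 2 * ((j : ℝ) + 1) ^ (2 * m))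
    (hζ : Summable fun j : ℕ => ‖ζ j‖ ^ 2 / ((j : ℝ) + 1) ^ (2 * m)) :
    ‖pairing ζ ξ‖ ≤ mnorm m ζ * pnorm m ξ := by
  set f : ℕ → ℝ := fun j => ‖ζ j‖ / ((j : ℝ) + 1) ^ m with hfdef
  set g : ℕ → ℝ := fun j => ‖ξ j‖ * ((j : ℝ) + 1) ^ m with hgdef
  have hf0 : ∀ j, 0 ≤ f j := fun j => by positivity
  have hg0 : ∀ j, 0 ≤ g j := fun j => by positivity
  have hf2 : ∀ j, f j ^ 2 = ‖ζ j‖ ^ 2 / ((j : ℝ) + 1) ^ (2 * m) := fun j => by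
    rw [hfdef]; rw [div_pow, ← pow_mul, mul_comm m 2]
  have hg2 : ∀ j, g j ^ 2 = ‖ξ j‖ ^ 2 * ((j : ℝ) + 1) ^ (2 * m) := fun j => by
    rw [hgdef]; rw [mul_pow, ← pow_mul, mul_comm m 2]
  have hfs : Summable fun j => f j ^ 2 := hζ.congr fun j => (hf2 j).symm
  have hgs : Summable fun j => g j ^ 2 := hξ.congr fun j => (hg2 j).symm
  have hfg : ∀ j, ‖ζ j * (starRingEnd ℂ) (ξ j)‖ = f j * g j := by
    intro j
    have hw : ((j : ℝ) + 1) ^ m ≠ 0 := by positivity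
    rw [norm_mul, RCLike.norm_conj, hfdef, hgdef]
    field_simp
  have h1 : ‖pairing ζ ξ‖ ≤ ∑' j, f j * g j := by
    unfold pairing
    have hs : Summable fun j => ‖ζ j * (starRingEnd ℂ) (ξ j)‖ :=
      (summable_mul_of_sq f g hf0 hg0 hfs hgs).congr fun j => (hfg j).symm
    refine le_trans (norm_tsum_le_tsum_norm hs) (le_of_eq (tsum_congr hfg))
  refine h1.trans ?_
  have := tsum_cs f g hf0 hg0 hfs hgs
  rwa [tsum_congr hf2, tsum_congr hg2] at this

lemma pnorm_rankOne (ξ ζ : ℕ → ℂ) (m : ℕ) :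
    pnorm m (rankOne ξ ζ) = (pnorm 0 ξ)⁻¹ * ‖pairing ζ ξ‖ * pnorm m ξ := by
  have : pnorm m (rankOne ξ ζ)
      = ‖(((pnorm 0 ξ : ℝ)⁻¹ : ℂ) * pairing ζ ξ)‖ * pnorm m ξ := by
    have hr : rankOne ξ ζ = fun j => (((pnorm 0 ξ : ℝ)⁻¹ : ℂ) * pairing ζ ξ) * ξ j := rfl
    rw [hr, pnorm_const_mul]
  rw [this, norm_mul, norm_inv, Complex.norm_real, Real.norm_eq_abs,
    abs_of_nonneg (pnorm_nonneg 0 ξ)]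

lemma pnorm_zero_le (ξ : ℕ → ℂ) (m : ℕ) (hξ : InS ξ) : pnorm 0 ξ ≤ pnorm m ξ := by
  unfold pnorm
  apply Real.sqrt_le_sqrt
  refine Summable.tsum_le_tsum (fun j => ?_) (hξ 0) (hξ m)
  have h1 : (1 : ℝ) ≤ ((j : ℝ) + 1) ^ (2 * m) :=
    one_le_pow₀ (by linarith [Nat.cast_nonneg (α := ℝ) j])
  rw [mul_zero, pow_zero, mul_one]
  nlinarith [sq_nonneg (‖ξ j‖)]

lemma rankOne_ub (ξ : ℕ → ℂ) (hξ : InS ξ) (h0 : pnorm 0 ξ ≠ 0) (m : ℕ) (ζ : ℕ → ℂ)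
    (hζ : Summable fun j : ℕ => ‖ζ j‖ ^ 2 / ((j : ℝ) + 1) ^ (2 * m))
    (hζ1 : mnorm m ζ ≤ 1) :
    pnorm m (rankOne ξ ζ) ≤ (pnorm 0 ξ)⁻¹ * (pnorm m ξ) ^ 2 := by
  rw [pnorm_rankOne]
  have hb := pairing_bound ξ ζ m (hξ m) hζ
  have hp := pnorm_nonneg m ξ
  have h0' : 0 ≤ (pnorm 0 ξ)⁻¹ := inv_nonneg.2 (pnorm_nonneg 0 ξ)
  have hle : ‖pairing ζ ξ‖ ≤ pnorm m ξ := hb.trans (by nlinarith)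
  nlinarith [mul_nonneg h0' hp, norm_nonneg (pairing ζ ξ)]

lemma ub_le (ξ : ℕ → ℂ) (hξ : InS ξ) (h0 : pnorm 0 ξ ≠ 0) (m : ℕ) :
    (pnorm 0 ξ)⁻¹ * (pnorm m ξ) ^ 2 ≤ pnorm (2 * m) ξ := by
  have hp0 : 0 < pnorm 0 ξ := (pnorm_nonneg 0 ξ).lt_of_ne (Ne.symm h0)
  set f : ℕ → ℝ := fun j => ‖ξ j‖ with hfdef
  set g : ℕ → ℝ := fun j => ‖ξ j‖ * ((j : ℝ) + 1) ^ (2 * m) with hgdef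
  have hf0 : ∀ j, 0 ≤ f j := fun j => norm_nonneg _
  have hg0 : ∀ j, 0 ≤ g j := fun j => by positivity
  have hf2 : ∀ j, f j ^ 2 = ‖ξ j‖ ^ 2 * ((j : ℝ) + 1) ^ (2 * 0) := fun j => by
    rw [hfdef]; norm_num
  have hg2 : ∀ j, g j ^ 2 = ‖ξ j‖ ^ 2 * ((j : ℝ) + 1) ^ (2 * (2 * m)) := fun j => by
    rw [hgdef, mul_pow, ← pow_mul, show 2 * m * 2 = 2 * (2 * m) from by ring]
  have hfs : Summable fun j => f j ^ 2 := (hξ 0).congr fun j => (hf2 j).symm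
  have hgs : Summable fun j => g j ^ 2 := (hξ (2 * m)).congr fun j => (hg2 j).symm
  have key : (pnorm m ξ) ^ 2 ≤ pnorm 0 ξ * pnorm (2 * m) ξ := by
    have h1 : (pnorm m ξ) ^ 2 = ∑' j, f j * g j := by
      rw [pnorm, Real.sq_sqrt (tsum_nonneg fun j => by positivity)]
      exact tsum_congr fun j => by rw [hfdef, hgdef]; ring
    rw [h1]
    have h2 := tsum_cs f g hf0 hg0 hfs hgs
    rw [tsum_congr hf2, tsum_congr hg2] at h2
    exact h2
  calc (pnorm 0 ξ)⁻¹ * (pnorm m ξ) ^ 2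
      ≤ (pnorm 0 ξ)⁻¹ * (pnorm 0 ξ * pnorm (2 * m) ξ) := by gcongr
    _ = pnorm (2 * m) ξ := by field_simp

lemma mem_set (ξ : ℕ → ℂ) (hξ : InS ξ) (h0 : pnorm 0 ξ ≠ 0) (m : ℕ) :
    ∃ ζ : ℕ → ℂ, (Summable fun j : ℕ => ‖ζ j‖ ^ 2 / ((j : ℝ) + 1) ^ (2 * m)) ∧
      mnorm m ζ ≤ 1 ∧ pnorm m (rankOne ξ ζ) = (pnorm 0 ξ)⁻¹ * (pnorm m ξ) ^ 2 := by
  have hp0 : 0 < pnorm 0 ξ := (pnorm_nonneg 0 ξ).lt_of_ne (Ne.symm h0)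
  have hp : 0 < pnorm m ξ := lt_of_lt_of_le hp0 (pnorm_zero_le ξ m hξ)
  set p := pnorm m ξ with hpdef
  set T := ∑' j : ℕ, ‖ξ j‖ ^ 2 * ((j : ℝ) + 1) ^ (2 * m) with hT
  have hTnn : 0 ≤ T := tsum_nonneg fun j => by positivity
  have hpT : p ^ 2 = T := by rw [hpdef, pnorm, Real.sq_sqrt hTnn]
  set ζ : ℕ → ℂ := fun j => ξ j * ((((j : ℝ) + 1) ^ (2 * m) / p : ℝ) : ℂ) with hζdef
  have hz : ∀ j : ℕ, ‖ζ j‖ ^ 2 / ((j : ℝ) + 1) ^ (2 * m)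
      = (‖ξ j‖ ^ 2 * ((j : ℝ) + 1) ^ (2 * m)) / p ^ 2 := by
    intro j
    have hw : (0 : ℝ) < ((j : ℝ) + 1) ^ (2 * m) := by positivity
    simp only [hζdef, norm_mul, Complex.norm_real, Real.norm_eq_abs,
      abs_of_nonneg (div_nonneg hw.le hp.le)]
    field_simp
  have hsum : Summable fun j : ℕ => ‖ζ j‖ ^ 2 / ((j : ℝ) + 1) ^ (2 * m) :=
    (((hξ m).div_const (p ^ 2)).congr fun j => (hz j).symm)
  have hmn : mnorm m ζ = 1 := by
    rw [mnorm, tsum_congr hz, tsum_div_const, ← hT, ← hpT,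
      div_self (pow_ne_zero 2 hp.ne'), Real.sqrt_one]
  have hpair : pairing ζ ξ = ((p : ℝ) : ℂ) := by
    unfold pairing
    have hptw : ∀ j : ℕ, ζ j * (starRingEnd ℂ) (ξ j)
        = ((‖ξ j‖ ^ 2 * ((j : ℝ) + 1) ^ (2 * m) / p : ℝ) : ℂ) := by
      intro j
      simp only [hζdef]
      rw [mul_comm (ξ j) _, mul_assoc, Complex.mul_conj']
      push_cast
      ring
    rw [tsum_congr hptw, ← Complex.ofReal_tsum]
    congr 1
    rw [tsum_div_const, ← hT, ← hpT, sq, mul_div_assoc, div_self hp.ne', mul_one]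
  refine ⟨ζ, hsum, le_of_eq hmn, ?_⟩
  rw [pnorm_rankOne, hpair, Complex.norm_real, Real.norm_eq_abs, abs_of_nonneg hp.le]
  ring

/-- For `0 ≠ ξ ∈ s` the rank-one operator `x_ξ = ‖ξ‖₂⁻¹⟨·,ξ⟩ξ` satisfies
`‖x_ξ‖_m = ‖ξ‖₂⁻¹|ξ|_m² ≤ |ξ|_{2m}`; consequently `{x_ξ : ξ ∈ B, ξ ≠ 0}` is a bounded
subset of `L(s',s)` whenever `B` is a bounded subset of `s`. -/
theorem stmt19 :
    (∀ ξ : ℕ → ℂ, InS ξ → pnorm 0 ξ ≠ 0 → ∀ m : ℕ,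
      sSup {r : ℝ | ∃ ζ : ℕ → ℂ,
          (Summable fun j : ℕ => ‖ζ j‖ ^ 2 / ((j : ℝ) + 1) ^ (2 * m)) ∧
          mnorm m ζ ≤ 1 ∧ r = pnorm m (rankOne ξ ζ)} =
        (pnorm 0 ξ)⁻¹ * (pnorm m ξ) ^ 2 ∧
      (pnorm 0 ξ)⁻¹ * (pnorm m ξ) ^ 2 ≤ pnorm (2 * m) ξ) ∧
    (∀ B : Set (ℕ → ℂ), (∀ ξ ∈ B, InS ξ) →
      (∀ n : ℕ, ∃ C : ℝ, ∀ ξ ∈ B, pnorm n ξ ≤ C) →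
      ∀ m : ℕ, ∃ C : ℝ, ∀ ξ ∈ B, pnorm 0 ξ ≠ 0 →
        ∀ ζ : ℕ → ℂ, (Summable fun j : ℕ => ‖ζ j‖ ^ 2 / ((j : ℝ) + 1) ^ (2 * m)) →
          mnorm m ζ ≤ 1 → pnorm m (rankOne ξ ζ) ≤ C) := by
  constructor
  · intro ξ hξ h0 m
    refine ⟨?_, ub_le ξ hξ h0 m⟩
    obtain ⟨ζ, hs, h1, he⟩ := mem_set ξ hξ h0 m
    refine IsGreatest.csSup_eq ⟨⟨ζ, hs, h1, he.symm⟩, ?_⟩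
    rintro r ⟨ζ', hs', h1', rfl⟩
    exact rankOne_ub ξ hξ h0 m ζ' hs' h1'
  · intro B hB hBC m
    obtain ⟨C, hC⟩ := hBC (2 * m)
    exact ⟨C, fun ξ hξB h0 ζ hs h1 =>
      ((rankOne_ub ξ (hB ξ hξB) h0 m ζ hs h1).trans (ub_le ξ (hB ξ hξB) h0 m)).trans
        (hC ξ hξB)⟩
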